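/- For every x ∈ ℝ \ {0} and every y ∈ (0,1): (1 − y²((n−1)/n)²) · γ̃(xy) ≤ γ(x) ≤ 16 · γ̃(x). -/

import Mathlib

open scoped BigOperators
open Finset

private lemma min1_nonneg {a : ℝ} (ha : 0 ≤ a) : 0 ≤ min 1 a := le_min zero_le_one ha

private lemma psi_nonneg (x t : ℝ) : 0 ≤ t ^ 2 * min 1 |x * t| :=
  mul_nonneg (sq_nonneg t) (min1_nonneg (abs_nonneg _))

private lemma min1_mono {a b : ℝ} (h : a ≤ b) : min 1 a ≤ min 1 b :=
  min_le_min le_rfl h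

private lemma min1_subadd {a b : ℝ} (ha : 0 ≤ a) (hb : 0 ≤ b) :
    min 1 (a + b) ≤ min 1 a + min 1 b := by
  rcases le_total 1 a with h | h
  · have h2 : 0 ≤ min 1 b := min1_nonneg hb
    have h1 : min 1 a = 1 := min_eq_left h
    have h3 : min 1 (a + b) ≤ 1 := min_le_left _ _
    linarith
  · rcases le_total 1 b with h' | h'
    · have h2 : 0 ≤ min 1 a := min1_nonneg ha
      have h1 : min 1 b = 1 := min_eq_left h'
      have h3 : min 1 (a + b) ≤ 1 := min_le_left _ _
      linarith
    · have h1 : min 1 a = a := min_eq_right h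
      have h2 : min 1 b = b := min_eq_right h'
      have h3 : min 1 (a + b) ≤ a + b := min_le_right _ _
      linarith

private lemma cheby {n : ℕ} (x : ℝ) (hx : x ≠ 0) (p : Fin n → ℝ) :
    (∑ r, (p r) ^ 2) * (∑ r, min 1 |x * p r|) ≤
      (n : ℝ) * ∑ r, (p r) ^ 2 * min 1 |x * p r| := by
  have hmono : Monovary (fun r => (p r) ^ 2) (fun r => min 1 |x * p r|) := by
    intro i j hij
    simp only at hij ⊢
    have h1 : |x * p i| < |x * p j| := by
      by_contra hc
      push_neg at hc
      exact absurd (min1_mono hc) (not_le.2 hij)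
    rw [abs_mul, abs_mul] at h1
    have hx0 : 0 < |x| := abs_pos.2 hx
    have h2 : |p i| ≤ |p j| := (lt_of_mul_lt_mul_left h1 (abs_nonneg x)).le
    calc (p i) ^ 2 = |p i| ^ 2 := (sq_abs _).symm
      _ ≤ |p j| ^ 2 := by gcongr
      _ = (p j) ^ 2 := sq_abs _
  have := hmono.sum_mul_sum_le_card_mul_sum
  simpa using this

private lemma sum_sq_sub {n : ℕ} (p : Fin n → ℝ) (hp : ∑ s, p s = 0) (c : ℝ) :
    ∑ s, (c - p s) ^ 2 = (n : ℝ) * c ^ 2 + ∑ s, (p s) ^ 2 := by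
  have h : ∀ s : Fin n, (c - p s) ^ 2 = (c ^ 2 - (2 * c) * p s) + (p s) ^ 2 := fun s => by ring
  rw [Finset.sum_congr rfl fun s _ => h s, Finset.sum_add_distrib, Finset.sum_sub_distrib,
    ← Finset.mul_sum, hp, Finset.sum_const, card_univ, Fintype.card_fin, nsmul_eq_mul]
  ring

private lemma star {n : ℕ} (x : ℝ) (hx : x ≠ 0) (p : Fin n → ℝ) (hp : ∑ s, p s = 0) :
    ∑ r, ∑ s, ((p r - p s) ^ 2 * min 1 |x * (p r - p s)|) ≤
      4 * (n : ℝ) * ∑ r, (p r) ^ 2 * min 1 |x * p r| := by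
  set m : Fin n → ℝ := fun r => min 1 |x * p r| with hm
  have step1 : ∀ r s : Fin n, (p r - p s) ^ 2 * min 1 |x * (p r - p s)| ≤
      (p r - p s) ^ 2 * (m r + m s) := by
    intro r s
    refine mul_le_mul_of_nonneg_left ?_ (sq_nonneg _)
    calc min 1 |x * (p r - p s)| ≤ min 1 (|x * p r| + |x * p s|) := by
          apply min1_mono
          have hxx : x * (p r - p s) = x * p r - x * p s := by ring
          rw [hxx]
          exact abs_sub _ _
      _ ≤ m r + m s := min1_subadd (abs_nonneg _) (abs_nonneg _)
  have hS2 := fun r => sum_sq_sub p hp (p r)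
  have step2 : ∑ r, ∑ s, ((p r - p s) ^ 2 * (m r + m s)) =
      2 * (n : ℝ) * (∑ r, (p r) ^ 2 * m r) + 2 * ((∑ r, (p r) ^ 2) * (∑ r, m r)) := by
    have e1 : ∀ r s : Fin n, (p r - p s) ^ 2 * (m r + m s) =
        (p r - p s) ^ 2 * m r + (p s - p r) ^ 2 * m s := fun r s => by ring
    rw [Finset.sum_congr rfl fun r _ => Finset.sum_congr rfl fun s _ => e1 r s]
    rw [Finset.sum_congr rfl fun r _ => Finset.sum_add_distrib]
    rw [Finset.sum_add_distrib]
    have t1 : ∑ r, ∑ s, (p r - p s) ^ 2 * m r =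
        ∑ r, ((n : ℝ) * (p r) ^ 2 + ∑ s, (p s) ^ 2) * m r := by
      refine Finset.sum_congr rfl fun r _ => ?_
      rw [← Finset.sum_mul, hS2 r]
    have t2 : ∑ r, ∑ s, (p s - p r) ^ 2 * m s =
        ∑ s, ((n : ℝ) * (p s) ^ 2 + ∑ r, (p r) ^ 2) * m s := by
      rw [Finset.sum_comm]
      refine Finset.sum_congr rfl fun s _ => ?_
      rw [← Finset.sum_mul, hS2 s]
    rw [t1, t2]
    simp only [add_mul, Finset.sum_add_distrib, mul_assoc, ← Finset.mul_sum, ← Finset.sum_mul]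
    ring
  calc ∑ r, ∑ s, ((p r - p s) ^ 2 * min 1 |x * (p r - p s)|)
      ≤ ∑ r, ∑ s, ((p r - p s) ^ 2 * (m r + m s)) :=
        Finset.sum_le_sum fun r _ => Finset.sum_le_sum fun s _ => step1 r s
    _ = 2 * (n : ℝ) * (∑ r, (p r) ^ 2 * m r) + 2 * ((∑ r, (p r) ^ 2) * (∑ r, m r)) := step2
    _ ≤ 2 * (n : ℝ) * (∑ r, (p r) ^ 2 * m r) + 2 * ((n : ℝ) * ∑ r, (p r) ^ 2 * m r) := by
        have := cheby x hx p
        linarith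
    _ = 4 * (n : ℝ) * ∑ r, (p r) ^ 2 * m r := by ring
private lemma numeric_step (N y v mu W : ℝ) (hN : 2 ≤ N) (hmu : 0 ≤ mu) (hW : 0 ≤ W)
    (h : N^4*(v^2*mu) ≤ (N-1)^2 * (W + (N-1)^2*(y^2*v^2*mu))) :
    (N^2 - y^2*(N-1)^2) * (v^2*mu) ≤ W := by
  have hT : 0 ≤ v^2*mu := mul_nonneg (sq_nonneg _) hmu
  have h1 : (0:ℝ) ≤ 2*N - 1 := by linarith
  have h2 : 0 ≤ (v^2*mu) * (N^2*(2*N-1)) := mul_nonneg hT (mul_nonneg (by positivity) h1)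
  have h3 : ((N^2 - y^2*(N-1)^2) * (v^2*mu)) * (N-1)^2 ≤ W * (N-1)^2 := by nlinarith [h, h2]
  have h4 : (0:ℝ) < (N-1)^2 := by nlinarith
  exact le_of_mul_le_mul_right h3 h4

theorem stmt_1
    (n : ℕ) (hn : 2 ≤ n) (a : Fin n → Fin n → ℝ)
    (atil : Fin n → Fin n → ℝ)
    (hatil : ∀ j r, atil j r =
      a j r - (∑ k, a k r) / n - (∑ s, a j s) / n + (∑ k, ∑ s, a k s) / (n : ℝ) ^ 2)
    (b : Fin n → Fin n → Fin n → Fin n → ℝ)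
    (hb : ∀ j k r s, b j k r s = a j r - a k r - a j s + a k s)
    (γ : ℝ → ℝ)
    (hγ : ∀ x, γ x = (∑ j, ∑ k, ∑ r, ∑ s,
      if j ≠ k ∧ r ≠ s then (b j k r s) ^ 2 * min 1 |x * b j k r s| else 0)
      / ((n : ℝ) ^ 2 * ((n : ℝ) - 1)))
    (γt : ℝ → ℝ)
    (hγt : ∀ x, γt x = (∑ j, ∑ r, (atil j r) ^ 2 * min 1 |x * atil j r|)
      / ((n : ℝ) - 1))
    (x : ℝ) (hx : x ≠ 0) (y : ℝ) (hy : y ∈ Set.Ioo (0 : ℝ) 1) :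
    (1 - y ^ 2 * (((n : ℝ) - 1) / n) ^ 2) * γt (x * y) ≤ γ x ∧
      γ x ≤ 16 * γt x := by
  obtain ⟨hy0, hy1⟩ := hy
  have hN2 : (2:ℝ) ≤ (n:ℝ) := by exact_mod_cast hn
  have hN0 : (0:ℝ) < (n:ℝ) := by linarith
  have hNne : ((n:ℝ)) ≠ 0 := ne_of_gt hN0
  have hN1 : (0:ℝ) < (n:ℝ) - 1 := by linarith
  -- row sums of atil vanish
  have hrow : ∀ j, ∑ s, atil j s = 0 := by
    intro j
    have hc : ∑ s : Fin n, ∑ k, a k s = ∑ k, ∑ s, a k s := Finset.sum_comm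
    simp only [hatil, Finset.sum_add_distrib, Finset.sum_sub_distrib, ← Finset.sum_div,
      Finset.sum_const, card_univ, Fintype.card_fin, nsmul_eq_mul]
    rw [hc]
    field_simp
    ring
  have hcol : ∀ r, ∑ j, atil j r = 0 := by
    intro r
    simp only [hatil, Finset.sum_add_distrib, Finset.sum_sub_distrib, ← Finset.sum_div,
      Finset.sum_const, card_univ, Fintype.card_fin, nsmul_eq_mul]
    field_simp
    ring
  have hbtil : ∀ j k r s, b j k r s = atil j r - atil k r - (atil j s - atil k s) := by
    intro j k r s
    rw [hb, hatil j r, hatil k r, hatil j s, hatil k s]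
    ring
  have hgam : γ x = (∑ j, ∑ k, ∑ r, ∑ s, (b j k r s) ^ 2 * min 1 |x * b j k r s|)
      / ((n : ℝ) ^ 2 * ((n : ℝ) - 1)) := by
    rw [hγ]
    congr 1
    refine Finset.sum_congr rfl fun j _ => Finset.sum_congr rfl fun k _ =>
      Finset.sum_congr rfl fun r _ => Finset.sum_congr rfl fun s _ => ?_
    by_cases h : j ≠ k ∧ r ≠ s
    · simp [h]
    · have hb0 : b j k r s = 0 := by
        rcases not_and_or.mp h with h' | h'
        · push_neg at h'
          rw [hb, h']; ring
        · push_neg at h'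
          rw [hb, h']; ring
      simp [h, hb0]
  constructor
  · -- lower bound
    have key : ∀ j r, ((n:ℝ)^2 - y^2*((n:ℝ)-1)^2) * ((atil j r)^2 * min 1 |x * y * atil j r|)
        ≤ ∑ k, ∑ s, (b j k r s)^2 * min 1 |x * b j k r s| := by
      intro j r
      set v := atil j r with hv
      set μ := min 1 |x * y * v| with hμ
      have hμ0 : 0 ≤ μ := min1_nonneg (abs_nonneg _)
      have hv2μ : 0 ≤ v^2*μ := mul_nonneg (sq_nonneg _) hμ0
      set K := Finset.univ.erase j with hK
      set S := Finset.univ.erase r with hS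
      have hbz1 : ∀ s, b j j r s = 0 := fun s => by rw [hb]; ring
      have hbz2 : ∀ k, b j k r r = 0 := fun k => by rw [hb]; ring
      have hcardK : ((K.card : ℕ) : ℝ) = (n:ℝ) - 1 := by
        rw [hK, Finset.card_erase_of_mem (Finset.mem_univ _), card_univ, Fintype.card_fin,
          Nat.cast_sub (by omega), Nat.cast_one]
      have hcardS : ((S.card : ℕ) : ℝ) = (n:ℝ) - 1 := by
        rw [hS, Finset.card_erase_of_mem (Finset.mem_univ _), card_univ, Fintype.card_fin,
          Nat.cast_sub (by omega), Nat.cast_one]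
      have her : ∑ k ∈ K, ∑ s ∈ S, b j k r s = ∑ k, ∑ s, b j k r s := by
        have e1 : ∀ k, ∑ s ∈ S, b j k r s = ∑ s, b j k r s := fun k =>
          Finset.sum_erase _ (hbz2 k)
        rw [Finset.sum_congr rfl fun k _ => e1 k]
        exact Finset.sum_erase _ (by simp [hbz1])
      have hfull : (n:ℝ)^2 * v = ∑ k, ∑ s, b j k r s := by
        have e1 : ∀ k : Fin n, ∑ s, b j k r s
            = (n:ℝ)*(a j r - a k r) - (∑ s, a j s) + (∑ s, a k s) := by
          intro k
          simp only [hb]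
          rw [Finset.sum_add_distrib, Finset.sum_sub_distrib,
            Finset.sum_const, card_univ, Fintype.card_fin, nsmul_eq_mul]
        rw [Finset.sum_congr rfl fun k _ => e1 k]
        rw [Finset.sum_add_distrib, Finset.sum_sub_distrib, Finset.sum_const,
          card_univ, Fintype.card_fin, nsmul_eq_mul, ← Finset.mul_sum,
          Finset.sum_sub_distrib, Finset.sum_const, card_univ, Fintype.card_fin,
          nsmul_eq_mul]
        rw [hv, hatil j r]
        field_simp
      -- Cauchy-Schwarz
      have hcs : ((n:ℝ)^2*v)^2 ≤ ((n:ℝ)-1)^2 * ∑ k ∈ K, ∑ s ∈ S, (b j k r s)^2 := by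
        rw [hfull, ← her]
        have c1 : (∑ k ∈ K, ∑ s ∈ S, b j k r s)^2
            ≤ (K.card:ℝ) * ∑ k ∈ K, (∑ s ∈ S, b j k r s)^2 := sq_sum_le_card_mul_sum_sq
        have c2 : ∀ k, (∑ s ∈ S, b j k r s)^2 ≤ (S.card:ℝ) * ∑ s ∈ S, (b j k r s)^2 :=
          fun k => sq_sum_le_card_mul_sum_sq
        calc (∑ k ∈ K, ∑ s ∈ S, b j k r s)^2
            ≤ (K.card:ℝ) * ∑ k ∈ K, ((S.card:ℝ) * ∑ s ∈ S, (b j k r s)^2) :=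
              le_trans c1 (mul_le_mul_of_nonneg_left
                (Finset.sum_le_sum fun k _ => c2 k) (by positivity))
          _ = ((K.card:ℝ) * (S.card:ℝ)) * ∑ k ∈ K, ∑ s ∈ S, (b j k r s)^2 := by
              rw [← Finset.mul_sum]; ring
          _ = ((n:ℝ)-1)^2 * ∑ k ∈ K, ∑ s ∈ S, (b j k r s)^2 := by
              rw [hcardK, hcardS]; ring
      -- per-term bound
      have hterm : ∀ k s, (b j k r s)^2 * μ
          ≤ (b j k r s)^2 * min 1 |x * b j k r s| + y^2*v^2*μ := by
        intro k s
        rcases le_or_gt |x * y * v| |x * b j k r s| with h | h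
        · have h1 : μ ≤ min 1 |x * b j k r s| := by
            rw [hμ]; exact min1_mono h
          have h2 := mul_le_mul_of_nonneg_left h1 (sq_nonneg (b j k r s))
          have h3 : 0 ≤ y^2*v^2*μ := by positivity
          linarith
        · have hyv : x * y * v = x * (y * v) := by ring
          rw [hyv, abs_mul, abs_mul] at h
          have h1 : |b j k r s| ≤ |y * v| :=
            (lt_of_mul_lt_mul_left h (abs_nonneg x)).le
          have h2 : (b j k r s)^2 ≤ y^2*v^2 := by
            have h5 := mul_self_le_mul_self (abs_nonneg _) h1
            rw [abs_mul_abs_self, abs_mul_abs_self] at h5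
            nlinarith [h5]
          have h3 := mul_le_mul_of_nonneg_right h2 hμ0
          have h4 : 0 ≤ (b j k r s)^2 * min 1 |x * b j k r s| := psi_nonneg x _
          linarith
      have hconst : ∑ k ∈ K, ∑ s ∈ S, (y^2*v^2*μ) = ((n:ℝ)-1)^2 * (y^2*v^2*μ) := by
        rw [Finset.sum_const, Finset.sum_const, nsmul_eq_mul, nsmul_eq_mul, hcardK, hcardS]
        ring
      have hsum1 : ∑ k ∈ K, ∑ s ∈ S, (b j k r s)^2 * μ
          ≤ (∑ k ∈ K, ∑ s ∈ S, (b j k r s)^2 * min 1 |x * b j k r s|)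
            + ((n:ℝ)-1)^2 * (y^2*v^2*μ) := by
        calc ∑ k ∈ K, ∑ s ∈ S, (b j k r s)^2 * μ
            ≤ ∑ k ∈ K, ∑ s ∈ S, ((b j k r s)^2 * min 1 |x * b j k r s| + y^2*v^2*μ) :=
              Finset.sum_le_sum fun k _ => Finset.sum_le_sum fun s _ => hterm k s
          _ = (∑ k ∈ K, ∑ s ∈ S, (b j k r s)^2 * min 1 |x * b j k r s|)
              + ∑ k ∈ K, ∑ s ∈ S, (y^2*v^2*μ) := by
              rw [Finset.sum_congr rfl fun k (_ : k ∈ K) => Finset.sum_add_distrib,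
                Finset.sum_add_distrib]
          _ = _ := by rw [hconst]
      set W := ∑ k, ∑ s, (b j k r s)^2 * min 1 |x * b j k r s| with hW
      have hWnn : 0 ≤ W :=
        Finset.sum_nonneg fun k _ => Finset.sum_nonneg fun s _ => psi_nonneg x _
      have hWKS : ∑ k ∈ K, ∑ s ∈ S, (b j k r s)^2 * min 1 |x * b j k r s| ≤ W := by
        rw [hW]
        calc ∑ k ∈ K, ∑ s ∈ S, (b j k r s)^2 * min 1 |x * b j k r s|
            ≤ ∑ k ∈ K, ∑ s, (b j k r s)^2 * min 1 |x * b j k r s| :=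
              Finset.sum_le_sum fun k _ =>
                Finset.sum_le_sum_of_subset_of_nonneg (Finset.subset_univ _)
                  (fun s _ _ => psi_nonneg x _)
          _ ≤ ∑ k, ∑ s, (b j k r s)^2 * min 1 |x * b j k r s| :=
              Finset.sum_le_sum_of_subset_of_nonneg (Finset.subset_univ _)
                (fun k _ _ => Finset.sum_nonneg fun s _ => psi_nonneg x _)
      have hQμ : (∑ k ∈ K, ∑ s ∈ S, (b j k r s)^2) * μ
          = ∑ k ∈ K, ∑ s ∈ S, ((b j k r s)^2 * μ) := by
        rw [Finset.sum_mul]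
        exact Finset.sum_congr rfl fun k _ => by rw [Finset.sum_mul]
      have e3 : (n:ℝ)^4*(v^2*μ) ≤ ((n:ℝ)-1)^2 * (W + ((n:ℝ)-1)^2*(y^2*v^2*μ)) := by
        have e0 : (n:ℝ)^4*(v^2*μ) = ((n:ℝ)^2*v)^2*μ := by ring
        have e1 : ((n:ℝ)^2*v)^2*μ
            ≤ (((n:ℝ)-1)^2 * ∑ k ∈ K, ∑ s ∈ S, (b j k r s)^2)*μ :=
          mul_le_mul_of_nonneg_right hcs hμ0
        rw [e0]
        refine le_trans e1 ?_
        rw [mul_assoc, hQμ]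
        refine mul_le_mul_of_nonneg_left ?_ (by positivity)
        exact le_trans hsum1 (by linarith [hWKS])
      exact numeric_step (n:ℝ) y v μ W hN2 hμ0 hWnn e3
    have hsumkey : ((n:ℝ)^2 - y^2*((n:ℝ)-1)^2)
        * (∑ j, ∑ r, (atil j r)^2 * min 1 |x * y * atil j r|)
        ≤ ∑ j, ∑ k, ∑ r, ∑ s, (b j k r s)^2 * min 1 |x * b j k r s| := by
      calc ((n:ℝ)^2 - y^2*((n:ℝ)-1)^2) * (∑ j, ∑ r, (atil j r)^2 * min 1 |x * y * atil j r|)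
          = ∑ j, ∑ r, ((n:ℝ)^2 - y^2*((n:ℝ)-1)^2)
              * ((atil j r)^2 * min 1 |x * y * atil j r|) := by
            rw [Finset.mul_sum]
            exact Finset.sum_congr rfl fun j _ => by rw [Finset.mul_sum]
        _ ≤ ∑ j, ∑ r, ∑ k, ∑ s, (b j k r s)^2 * min 1 |x * b j k r s| :=
            Finset.sum_le_sum fun j _ => Finset.sum_le_sum fun r _ => key j r
        _ = ∑ j, ∑ k, ∑ r, ∑ s, (b j k r s)^2 * min 1 |x * b j k r s| :=
            Finset.sum_congr rfl fun j _ => Finset.sum_comm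
    rw [hgam, hγt]
    have hcoef : (1 - y^2*(((n:ℝ)-1)/(n:ℝ))^2) = ((n:ℝ)^2 - y^2*((n:ℝ)-1)^2)/(n:ℝ)^2 := by
      field_simp
    rw [hcoef, div_mul_div_comm]
    exact (div_le_div_iff_of_pos_right (by positivity)).mpr hsumkey
  · -- upper bound
    have stage1 : ∀ j k, ∑ r, ∑ s, (b j k r s)^2 * min 1 |x * b j k r s|
        ≤ 4*(n:ℝ) * ∑ s, (atil j s - atil k s)^2 * min 1 |x * (atil j s - atil k s)| := by
      intro j k
      have hp : ∑ s, (atil j s - atil k s) = 0 := by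
        rw [Finset.sum_sub_distrib, hrow j, hrow k]; ring
      have hst := star x hx (fun s => atil j s - atil k s) hp
      calc ∑ r, ∑ s, (b j k r s)^2 * min 1 |x * b j k r s|
          = ∑ r, ∑ s, (atil j r - atil k r - (atil j s - atil k s))^2
              * min 1 |x * (atil j r - atil k r - (atil j s - atil k s))| := by
            refine Finset.sum_congr rfl fun r _ => Finset.sum_congr rfl fun s _ => ?_
            rw [hbtil j k r s]
        _ ≤ 4*(n:ℝ) * ∑ s, (atil j s - atil k s)^2 * min 1 |x * (atil j s - atil k s)| := hst
    have stage2 : ∀ s, ∑ j, ∑ k, (atil j s - atil k s)^2 * min 1 |x * (atil j s - atil k s)|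
        ≤ 4*(n:ℝ) * ∑ j, (atil j s)^2 * min 1 |x * atil j s| := by
      intro s
      have hst := star x hx (fun j => atil j s) (hcol s)
      simpa using hst
    have upper : ∑ j, ∑ k, ∑ r, ∑ s, (b j k r s)^2 * min 1 |x * b j k r s|
        ≤ 16*(n:ℝ)^2 * ∑ j, ∑ r, (atil j r)^2 * min 1 |x * atil j r| := by
      have swap3 : ∑ j, ∑ k, ∑ s, (atil j s - atil k s)^2 * min 1 |x * (atil j s - atil k s)|
          = ∑ s, ∑ j, ∑ k, (atil j s - atil k s)^2 * min 1 |x * (atil j s - atil k s)| :=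
        Eq.trans (Finset.sum_congr rfl fun j _ => Finset.sum_comm) Finset.sum_comm
      calc ∑ j, ∑ k, ∑ r, ∑ s, (b j k r s)^2 * min 1 |x * b j k r s|
          ≤ ∑ j, ∑ k, (4*(n:ℝ) * ∑ s, (atil j s - atil k s)^2
              * min 1 |x * (atil j s - atil k s)|) :=
            Finset.sum_le_sum fun j _ => Finset.sum_le_sum fun k _ => stage1 j k
        _ = ∑ j, (4*(n:ℝ) * ∑ k, ∑ s, (atil j s - atil k s)^2
              * min 1 |x * (atil j s - atil k s)|) :=
            Finset.sum_congr rfl fun j _ => by rw [← Finset.mul_sum]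
        _ = 4*(n:ℝ) * ∑ j, ∑ k, ∑ s, (atil j s - atil k s)^2
              * min 1 |x * (atil j s - atil k s)| := by rw [← Finset.mul_sum]
        _ = 4*(n:ℝ) * ∑ s, ∑ j, ∑ k, (atil j s - atil k s)^2
              * min 1 |x * (atil j s - atil k s)| := by rw [swap3]
        _ ≤ 4*(n:ℝ) * ∑ s, (4*(n:ℝ) * ∑ j, (atil j s)^2 * min 1 |x * atil j s|) :=
            mul_le_mul_of_nonneg_left (Finset.sum_le_sum fun s _ => stage2 s)
              (by positivity)
        _ = 4*(n:ℝ) * (4*(n:ℝ) * ∑ s, ∑ j, (atil j s)^2 * min 1 |x * atil j s|) := by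
            rw [← Finset.mul_sum]
        _ = 16*(n:ℝ)^2 * ∑ j, ∑ r, (atil j r)^2 * min 1 |x * atil j r| := by
            rw [show (∑ s, ∑ j, (atil j s)^2 * min 1 |x * atil j s|)
              = ∑ j, ∑ s, (atil j s)^2 * min 1 |x * atil j s| from Finset.sum_comm]
            ring
    rw [hgam, hγt]
    have h16 : 16 * ((∑ j, ∑ r, (atil j r)^2 * min 1 |x * atil j r|)/((n:ℝ)-1))
        = (16*(n:ℝ)^2 * ∑ j, ∑ r, (atil j r)^2 * min 1 |x * atil j r|)
          /((n:ℝ)^2*((n:ℝ)-1)) := by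
      field_simp
      simp only [mul_comm x]
    rw [h16]
    exact (div_le_div_iff_of_pos_right (by positivity)).mpr upper
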